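/- Let (X, f_{1,∞}) be a nonautonomous discrete dynamical system such that the sequence (f_n)_{n∈ℕ} converges uniformly to a function φ : X → X. Then φ^q ∘ f_1^p = f_1^{p+q} for every free ultrafilter p on ℕ and every ultrafilter q ∈ β(ℕ). -/

import Mathlib

open Filter Topology

/-- The `n`-th iterate `f_1^n = f_n ∘ ⋯ ∘ f_1` (maps indexed from `1`; `f 0` unused). -/
def iterSeq {X : Type*} (f : ℕ → X → X) : ℕ → X → X
  | 0 => id
  | n + 1 => f (n + 1) ∘ iterSeq f n

/-- The `p`-limit of a sequence `u` with respect to an ultrafilter `p` on `ℕ`. -/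
noncomputable def pLim {X : Type*} [TopologicalSpace X] (p : Ultrafilter ℕ) (u : ℕ → X) : X :=
  letI : Nonempty X := ⟨u 0⟩
  limUnder (p : Filter ℕ) u

/-- `f_1^p(x) = p-lim_n f_1^n(x)`. -/
noncomputable def pIter {X : Type*} [TopologicalSpace X] (f : ℕ → X → X)
    (p : Ultrafilter ℕ) : X → X :=
  fun x => pLim p fun n => iterSeq f n x

/-- `φ^q(x) = q-lim_n φ^n(x)` for a single map `φ : X → X`. -/
noncomputable def pIterMap {X : Type*} [TopologicalSpace X] (φ : X → X)
    (q : Ultrafilter ℕ) : X → X :=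
  fun x => pLim q fun n => φ^[n] x

/-- The sum of two ultrafilters on `ℕ`: `A ∈ p + q` iff `{n : {m : m + n ∈ A} ∈ p} ∈ q`. -/
def uAdd (p q : Ultrafilter ℕ) : Ultrafilter ℕ :=
  q.bind fun n => p.map fun m => m + n

section Aux

variable {X : Type*} [MetricSpace X] [CompactSpace X]

/-- In a compact space, every sequence tends to its `p`-limit along `p`. -/
lemma tendsto_pLim (p : Ultrafilter ℕ) (u : ℕ → X) :
    Tendsto u (p : Filter ℕ) (𝓝 (pLim p u)) := by
  letI : Nonempty X := ⟨u 0⟩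
  obtain ⟨a, -, ha⟩ := isCompact_univ.ultrafilter_le_nhds (p.map u)
    (by simp)
  have ha' : Filter.map u (p : Filter ℕ) ≤ 𝓝 a := by
    rwa [← Ultrafilter.coe_map]
  exact le_nhds_lim ⟨a, ha'⟩

lemma pLim_eq {p : Ultrafilter ℕ} {u : ℕ → X} {a : X}
    (h : Tendsto u (p : Filter ℕ) (𝓝 a)) : pLim p u = a :=
  tendsto_nhds_unique (tendsto_pLim p u) h

/-- Continuous maps commute with `p`-limits. -/
lemma pLim_comp {g : X → X} (hg : Continuous g) (p : Ultrafilter ℕ) (u : ℕ → X) :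
    g (pLim p u) = pLim p fun n => g (u n) :=
  (pLim_eq ((hg.tendsto _).comp (tendsto_pLim p u))).symm

/-- Two sequences that are asymptotically close along `p` have the same `p`-limit. -/
lemma pLim_congr_dist {p : Ultrafilter ℕ} {u v : ℕ → X}
    (h : ∀ ε > 0, ∀ᶠ m in (p : Filter ℕ), dist (u m) (v m) < ε) :
    pLim p u = pLim p v := by
  apply pLim_eq
  rw [Metric.tendsto_nhds]
  intro ε hε
  filter_upwards [h (ε / 2) (by linarith),
    Metric.tendsto_nhds.mp (tendsto_pLim p v) (ε / 2) (by linarith)] with m h1 h2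
  calc dist (u m) (pLim p v) ≤ dist (u m) (v m) + dist (v m) (pLim p v) := dist_triangle ..
    _ < ε / 2 + ε / 2 := add_lt_add h1 h2
    _ = ε := by ring

lemma mem_uAdd {p q : Ultrafilter ℕ} {A : Set ℕ} :
    A ∈ uAdd p q ↔ {k | {m | m + k ∈ A} ∈ p} ∈ q := by
  show A ∈ Filter.bind ↑q (fun k => Filter.map (fun m => m + k) ↑p) ↔ _
  rw [Filter.mem_bind']
  rfl

/-- Iterated limit description of the limit along `uAdd p q`. -/
lemma pLim_uAdd (p q : Ultrafilter ℕ) (u : ℕ → X) :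
    pLim (uAdd p q) u = pLim q fun k => pLim p fun m => u (m + k) := by
  apply pLim_eq
  set R := pLim q fun k => pLim p fun m => u (m + k) with hR
  rw [Metric.tendsto_nhds]
  intro ε hε
  have hq : ∀ᶠ k in (q : Filter ℕ), dist (pLim p fun m => u (m + k)) R < ε / 2 :=
    Metric.tendsto_nhds.mp (tendsto_pLim q _) (ε / 2) (by linarith)
  have : {n | dist (u n) R < ε} ∈ uAdd p q := by
    rw [mem_uAdd]
    filter_upwards [hq] with k hk
    have hp' : ∀ᶠ m in (p : Filter ℕ),
        dist (u (m + k)) (pLim p fun m => u (m + k)) < ε / 2 :=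
      Metric.tendsto_nhds.mp (tendsto_pLim p _) (ε / 2) (by linarith)
    filter_upwards [hp'] with m hm
    calc dist (u (m + k)) R
        ≤ dist (u (m + k)) (pLim p fun m => u (m + k))
          + dist (pLim p fun m => u (m + k)) R := dist_triangle ..
      _ < ε / 2 + ε / 2 := add_lt_add hm hk
      _ = ε := by ring
  exact this

end Aux

/-- The composition `f (m+k) ∘ ⋯ ∘ f (m+1)`. -/
def compShift {X : Type*} (f : ℕ → X → X) (m : ℕ) : ℕ → X → X
  | 0 => id
  | k + 1 => f (m + k + 1) ∘ compShift f m k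

lemma iterSeq_add {X : Type*} (f : ℕ → X → X) (m k : ℕ) :
    iterSeq f (m + k) = compShift f m k ∘ iterSeq f m := by
  induction k with
  | zero => rfl
  | succ k ih =>
    show iterSeq f ((m + k) + 1) = _
    rw [iterSeq, ih]
    rfl

lemma key_estimate {X : Type*} [MetricSpace X] [CompactSpace X]
    (f : ℕ → X → X) (φ : X → X) (hφc : Continuous φ)
    (hconv : TendstoUniformly (fun n x => f n x) φ Filter.atTop) (k : ℕ) :
    ∀ ε > 0, ∀ᶠ m in atTop, ∀ y : X, dist (φ^[k] y) (compShift f m k y) < ε := by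
  induction k with
  | zero =>
    intro ε hε
    exact Eventually.of_forall fun m y => by simpa [compShift] using hε
  | succ k ih =>
    intro ε hε
    have hφu : UniformContinuous φ := CompactSpace.uniformContinuous_of_continuous hφc
    obtain ⟨δ, hδ, hδε⟩ := Metric.uniformContinuous_iff.mp hφu (ε / 2) (by linarith)
    have h1 := ih δ hδ
    have h2 : ∀ᶠ n in atTop, ∀ z : X, dist (φ z) (f n z) < ε / 2 :=
      Metric.tendstoUniformly_iff.mp hconv (ε / 2) (by linarith)
    obtain ⟨N, hN⟩ := eventually_atTop.mp h2
    have h2' : ∀ᶠ m in atTop, ∀ z : X, dist (φ z) (f (m + k + 1) z) < ε / 2 :=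
      eventually_atTop.mpr ⟨N, fun m hm => hN (m + k + 1) (by omega)⟩
    filter_upwards [h1, h2'] with m hm1 hm2 y
    have hit : φ^[k + 1] y = φ (φ^[k] y) := Function.iterate_succ_apply' φ k y
    calc dist (φ^[k + 1] y) (compShift f m (k + 1) y)
        = dist (φ (φ^[k] y)) (f (m + k + 1) (compShift f m k y)) := by rw [hit]; rfl
      _ ≤ dist (φ (φ^[k] y)) (φ (compShift f m k y))
          + dist (φ (compShift f m k y)) (f (m + k + 1) (compShift f m k y)) :=
            dist_triangle ..
      _ < ε / 2 + ε / 2 := add_lt_add (hδε (hm1 y)) (hm2 _)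
      _ = ε := by ring

/-- If `(f_n)` converges uniformly to `φ : X → X`, then `φ^q ∘ f_1^p = f_1^{p+q}` for every
free ultrafilter `p` on `ℕ` and every ultrafilter `q ∈ β(ℕ)`. -/
theorem stmt15 {X : Type*} [MetricSpace X] [CompactSpace X]
    (f : ℕ → X → X) (hf : ∀ n, 1 ≤ n → Continuous (f n))
    (φ : X → X) (hconv : TendstoUniformly (fun n x => f n x) φ Filter.atTop)
    (p : Ultrafilter ℕ) (hp : (p : Filter ℕ) ≤ Filter.cofinite)
    (q : Ultrafilter ℕ) :
    pIterMap φ q ∘ pIter f p = pIter f (uAdd p q) := by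
  have hφc : Continuous φ :=
    hconv.continuous (eventually_atTop.mpr ⟨1, fun n hn => hf n hn⟩).frequently
  have hpat : (p : Filter ℕ) ≤ atTop := by rwa [← Nat.cofinite_eq_atTop]
  funext x
  show pIterMap φ q (pIter f p x) = pIter f (uAdd p q) x
  unfold pIterMap pIter
  rw [pLim_uAdd]
  congr 1
  funext k
  rw [pLim_comp (hφc.iterate k) p]
  apply pLim_congr_dist
  intro ε hε
  have h := key_estimate f φ hφc hconv k ε hε
  have h' : ∀ᶠ m in atTop,
      dist (φ^[k] (iterSeq f m x)) (iterSeq f (m + k) x) < ε := by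
    filter_upwards [h] with m hm
    have : iterSeq f (m + k) x = compShift f m k (iterSeq f m x) := by
      rw [iterSeq_add]; rfl
    rw [this]
    exact hm _
  exact hpat h'
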